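/- Assume α = 1. Let f, g̃ : (0,1) → (0,∞) be any functions with lim_{ε→0} f(ε) = 0 and lim_{ε→0} g̃(ε) = +∞, and set a(ε) = f(ε)·ε^{−1/(1+γ⋆)} and b̃(ε) = g̃(ε)·ε^{−1/(1+γ⋆)}. Then the first passage time of the Wang–Landau process from state 1 to state 2 satisfies lim_{ε→0} P( a(ε) < T⁰₁→₂ < b̃(ε) ) = 1. -/

import Mathlib

open MeasureTheory ProbabilityTheory Filter Real Set Topology

noncomputable section

/-- The state space: index `0` is state "1", index `1` is state "2", index `2` is state "3". -/
abbrev WLState := Fin 3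

/-- First passage time of the trajectory `ω` to the state `s`
(with the convention `sInf ∅ = 0`). -/
def hitTime (s : WLState) (ω : ℕ → WLState) : ℕ := sInf {n : ℕ | ω n = s}

/-- A measure `μ` on trajectory space is the law of the (possibly path-dependent) Markov chain
with initial state `x0` and transition matrix `P x k` at time `k` given the past path `x`,
expressed through its cylinder probabilities. -/
def IsChainLaw (P : (ℕ → WLState) → ℕ → WLState → WLState → ℝ) (x0 : WLState)
    (μ : Measure (ℕ → WLState)) : Prop :=
  ∀ (n : ℕ) (x : ℕ → WLState),
    μ {ω : ℕ → WLState | ∀ k ≤ n, ω k = x k} =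
      (if x 0 = x0 then (1 : ENNReal) else 0) *
        ∏ k ∈ Finset.range n, ENNReal.ofReal (P x k (x k) (x (k + 1)))

/-- The unnormalized Wang-Landau weight `θ̃ₙ(i)` along the path `x`, with step sizes
`γₖ = γs k^(-α)`: it satisfies `θ̃₀ = (1,1,1)` and `θ̃ₙ₊₁(i) = θ̃ₙ(i)(1 + γₙ₊₁ 1_{xₙ₊₁ = i})`. -/
def wtilde (γs α : ℝ) (x : ℕ → WLState) (n : ℕ) (i : WLState) : ℝ :=
  ∏ k ∈ Finset.Icc 1 n, (1 + if x k = i then γs * (k : ℝ) ^ (-α) else 0)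

/-- The normalized Wang-Landau weight `θₙ(i)` along the path `x`. -/
def thetaNorm (γs α : ℝ) (x : ℕ → WLState) (n : ℕ) (i : WLState) : ℝ :=
  wtilde γs α x n i / ∑ j, wtilde γs α x n j

/-- The Metropolis transition matrix `P_θ` biased by the weight vector `θ`. -/
def PWL (ε : ℝ) (θ : WLState → ℝ) : WLState → WLState → ℝ :=
  ![![1 - 1 / 3 * min (ε * θ 0 / θ 1) 1, 1 / 3 * min (ε * θ 0 / θ 1) 1, 0],
    ![1 / 3 * min (θ 1 / (ε * θ 0)) 1,
      1 - 1 / 3 * min (θ 1 / (ε * θ 0)) 1 - 1 / 3 * min (θ 1 / (ε * θ 2)) 1,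
      1 / 3 * min (θ 1 / (ε * θ 2)) 1],
    ![0, 1 / 3 * min (ε * θ 2 / θ 1) 1, 1 - 1 / 3 * min (ε * θ 2 / θ 1) 1]]

/-- `μ` is the law of the Wang-Landau process with parameters `ε`, `γs`, `α`,
started at state "1" (index 0). -/
def IsWLLaw (ε γs α : ℝ) (μ : Measure (ℕ → WLState)) : Prop :=
  IsChainLaw (fun x k => PWL ε (thetaNorm γs α x k)) 0 μ

def Wpr (γ : ℝ) (k : ℕ) : ℝ := ∏ j ∈ Finset.Icc 1 k, (1 + γ / j)

lemma Wpr_pos {γ : ℝ} (hγ : 0 < γ) (k : ℕ) : 0 < Wpr γ k := by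
  apply Finset.prod_pos
  intro j hj
  have hj1 : 1 ≤ j := (Finset.mem_Icc.1 hj).1
  have : (0:ℝ) < j := by exact_mod_cast hj1
  positivity

lemma log_one_add_ge {x : ℝ} (hx : 0 ≤ x) : x / (1+x) ≤ Real.log (1+x) := by
  have h1 : (0:ℝ) < 1 + x := by linarith
  have h3 : (1:ℝ)/(1+x) ≤ Real.exp (-(x/(1+x))) := by
    have h := Real.add_one_le_exp (-(x/(1+x)))
    have h2 : (1:ℝ) - x/(1+x) = 1/(1+x) := by field_simp; ring
    linarith
  have h4 := Real.log_le_log (by positivity) h3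
  rw [Real.log_exp, Real.log_div one_ne_zero (ne_of_gt h1), Real.log_one] at h4
  linarith

lemma log_one_add_le {x : ℝ} (hx : 0 ≤ x) : Real.log (1+x) ≤ x := by
  have := Real.log_le_sub_one_of_pos (x := 1+x) (by linarith)
  linarith

lemma Wpr_log_ge {γ : ℝ} (hγ : 0 < γ) (k : ℕ) :
    γ * (Real.log (k+1+γ) - Real.log (1+γ)) ≤ Real.log (Wpr γ k) := by
  induction k with
  | zero => simp [Wpr]
  | succ k ih =>
    have hsucc : Wpr γ (k+1) = Wpr γ k * (1 + γ/(k+1)) := by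
      rw [Wpr, Finset.prod_Icc_succ_top (Nat.le_add_left 1 k)]; push_cast; rfl
    have hk1 : (0:ℝ) < (k:ℝ)+1 := by positivity
    have hx : (0:ℝ) ≤ γ/((k:ℝ)+1) := by positivity
    have hWpos := Wpr_pos hγ k
    rw [hsucc, Real.log_mul (ne_of_gt hWpos) (by positivity)]
    have key : γ * (Real.log ((k:ℝ)+1+1+γ) - Real.log ((k:ℝ)+1+γ)) ≤ Real.log (1 + γ/((k:ℝ)+1)) := by
      have e1 : Real.log ((k:ℝ)+1+1+γ) - Real.log ((k:ℝ)+1+γ) = Real.log (1 + 1/((k:ℝ)+1+γ)) := by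
        rw [← Real.log_div (by positivity) (by positivity)]
        congr 1; field_simp; ring
      have e2 : Real.log (1 + 1/((k:ℝ)+1+γ)) ≤ 1/((k:ℝ)+1+γ) := log_one_add_le (by positivity)
      have e3 : (γ/((k:ℝ)+1)) / (1 + γ/((k:ℝ)+1)) = γ/((k:ℝ)+1+γ) := by
        field_simp
      have e4 := log_one_add_ge hx
      rw [e3] at e4
      rw [e1]
      calc γ * Real.log (1 + 1/((k:ℝ)+1+γ)) ≤ γ * (1/((k:ℝ)+1+γ)) := by
            exact mul_le_mul_of_nonneg_left e2 (le_of_lt hγ)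
        _ = γ/((k:ℝ)+1+γ) := by ring
        _ ≤ _ := e4
    push_cast
    push_cast at ih
    nlinarith [key]

lemma Wpr_ge {γ : ℝ} (hγ : 0 < γ) (k : ℕ) :
    (((k:ℝ)+1)/(1+γ)) ^ γ ≤ Wpr γ k := by
  have h1 : (0:ℝ) < ((k:ℝ)+1)/(1+γ) := by positivity
  rw [← Real.exp_log (Wpr_pos hγ k), Real.rpow_def_of_pos h1]
  apply Real.exp_le_exp.2
  calc Real.log (((k:ℝ)+1)/(1+γ)) * γ
      = γ * (Real.log ((k:ℝ)+1) - Real.log (1+γ)) := by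
        rw [Real.log_div (by positivity) (by positivity)]; ring
    _ ≤ γ * (Real.log ((k:ℝ)+1+γ) - Real.log (1+γ)) := by
        have := Real.log_le_log (by positivity : (0:ℝ) < (k:ℝ)+1) (by linarith : (k:ℝ)+1 ≤ (k:ℝ)+1+γ)
        nlinarith
    _ ≤ _ := Wpr_log_ge hγ k

lemma Wpr_le {γ : ℝ} (hγ : 0 < γ) (k : ℕ) :
    Wpr γ k ≤ Real.exp γ * ((k:ℝ)+1) ^ γ := by
  have hlog : Real.log (Wpr γ k) ≤ γ * (1 + Real.log ((k:ℝ)+1)) := by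
    have h1 : Real.log (Wpr γ k) = ∑ j ∈ Finset.Icc 1 k, Real.log (1 + γ/j) := by
      rw [Wpr, Real.log_prod]
      intro j hj
      have hj1 : 1 ≤ j := (Finset.mem_Icc.1 hj).1
      have : (0:ℝ) < j := by exact_mod_cast hj1
      positivity
    have h2 : ∑ j ∈ Finset.Icc 1 k, Real.log (1 + γ/j) ≤ ∑ j ∈ Finset.Icc 1 k, γ * (j:ℝ)⁻¹ := by
      apply Finset.sum_le_sum
      intro j hj
      have hj1 : 1 ≤ j := (Finset.mem_Icc.1 hj).1
      have hjp : (0:ℝ) < j := by exact_mod_cast hj1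
      have := log_one_add_le (x := γ/j) (by positivity)
      rw [div_eq_mul_inv] at this
      exact this
    have h3 : ∑ j ∈ Finset.Icc 1 k, γ * (j:ℝ)⁻¹ = γ * ((harmonic k : ℚ) : ℝ) := by
      rw [← Finset.mul_sum]
      congr 1
      simp [harmonic_eq_sum_Icc, Rat.cast_sum]
    have h4 : ((harmonic k : ℚ) : ℝ) ≤ 1 + Real.log ((k:ℝ)+1) := by
      refine (harmonic_le_one_add_log k).trans ?_
      have : Real.log (k:ℝ) ≤ Real.log ((k:ℝ)+1) := by
        rcases Nat.eq_zero_or_pos k with h | h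
        · simp [h]
        · apply Real.log_le_log (by exact_mod_cast h); linarith
      linarith
    calc Real.log (Wpr γ k) = _ := h1
      _ ≤ _ := h2
      _ = _ := h3
      _ ≤ γ * (1 + Real.log ((k:ℝ)+1)) := by nlinarith [h4]
  calc Wpr γ k = Real.exp (Real.log (Wpr γ k)) := (Real.exp_log (Wpr_pos hγ k)).symm
    _ ≤ Real.exp (γ * (1 + Real.log ((k:ℝ)+1))) := Real.exp_le_exp.2 hlog
    _ = Real.exp γ * ((k:ℝ)+1) ^ γ := by
        rw [Real.rpow_def_of_pos (by positivity), mul_add, Real.exp_add, mul_one]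
        ring_nf

def pstay (ε γ : ℝ) (k : ℕ) : ℝ := 1 - 1/3 * min (ε * Wpr γ k) 1

lemma wtilde_zero (γ : ℝ) (n : ℕ) : wtilde γ 1 (fun _ => 0) n 0 = Wpr γ n := by
  unfold wtilde Wpr
  apply Finset.prod_congr rfl
  intro k hk
  have hk1 : 1 ≤ k := (Finset.mem_Icc.1 hk).1
  have hk0 : (0:ℝ) < k := by exact_mod_cast hk1
  rw [if_pos rfl, Real.rpow_neg_one]
  ring

lemma wtilde_one (γ : ℝ) (n : ℕ) (i : WLState) (hi : i ≠ 0) :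
    wtilde γ 1 (fun _ => 0) n i = 1 := by
  unfold wtilde
  apply Finset.prod_eq_one
  intro k hk
  rw [if_neg (fun h => hi h.symm), add_zero]

lemma PWL_zero_cyl (ε γ : ℝ) (hγ : 0 < γ) (k : ℕ) :
    PWL ε (thetaNorm γ 1 (fun _ => 0) k) 0 0 = 1 - 1/3 * min (ε * Wpr γ k) 1 := by
  have hW := Wpr_pos hγ k
  have hsum : ∑ j : WLState, wtilde γ 1 (fun _ => 0) k j = Wpr γ k + 2 := by
    rw [Fin.sum_univ_three, wtilde_zero, wtilde_one γ k 1 (by decide), wtilde_one γ k 2 (by decide)]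
    ring
  have hS : (0:ℝ) < Wpr γ k + 2 := by linarith
  have h0 : thetaNorm γ 1 (fun _ => 0) k 0 = Wpr γ k / (Wpr γ k + 2) := by
    unfold thetaNorm; rw [hsum, wtilde_zero]
  have h1 : thetaNorm γ 1 (fun _ => 0) k 1 = 1 / (Wpr γ k + 2) := by
    unfold thetaNorm; rw [hsum, wtilde_one γ k 1 (by decide)]
  have hratio : ε * thetaNorm γ 1 (fun _ => 0) k 0 / thetaNorm γ 1 (fun _ => 0) k 1
      = ε * Wpr γ k := by
    rw [h0, h1]; field_simp
  show 1 - 1 / 3 * min (ε * thetaNorm γ 1 (fun _ => 0) k 0 / thetaNorm γ 1 (fun _ => 0) k 1) 1 = _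
  rw [hratio]

lemma cyl_measure {ε γ : ℝ} (hγ : 0 < γ) {μ : Measure (ℕ → WLState)}
    (hμ : IsWLLaw ε γ 1 μ) (n : ℕ) :
    μ {ω : ℕ → WLState | ∀ k ≤ n, ω k = 0} =
      ∏ k ∈ Finset.range n, ENNReal.ofReal (pstay ε γ k) := by
  have := hμ n (fun _ => 0)
  rw [this, if_pos rfl, one_mul]
  apply Finset.prod_congr rfl
  intro k _
  show ENNReal.ofReal (PWL ε (thetaNorm γ 1 (fun _ => 0) k) 0 0) = _
  rw [PWL_zero_cyl ε γ hγ k]; rfl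

-- zero-measure bad cylinders
lemma PWL_02 (ε : ℝ) (θ : WLState → ℝ) : PWL ε θ 0 2 = 0 := rfl
lemma PWL_20 (ε : ℝ) (θ : WLState → ℝ) : PWL ε θ 2 0 = 0 := rfl

lemma bad_cyl {ε γ : ℝ} {μ : Measure (ℕ → WLState)}
    (hμ : IsWLLaw ε γ 1 μ) (n : ℕ) (x : ℕ → WLState)
    (hbad : x 0 ≠ 0 ∨ ∃ k < n, (x k = 0 ∧ x (k+1) = 2) ∨ (x k = 2 ∧ x (k+1) = 0)) :
    μ {ω : ℕ → WLState | ∀ k ≤ n, ω k = x k} = 0 := by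
  rw [hμ n x]
  rcases hbad with h0 | ⟨k, hk, hcase⟩
  · rw [if_neg h0, zero_mul]
  · have : ENNReal.ofReal (PWL ε (thetaNorm γ 1 x k) (x k) (x (k+1))) = 0 := by
      rcases hcase with ⟨ha, hb⟩ | ⟨ha, hb⟩ <;> rw [ha, hb] <;> simp [PWL_02, PWL_20]
    rw [Finset.prod_eq_zero (Finset.mem_range.2 hk) this, mul_zero]

/-- the no-hit event has measure at most the all-zero cylinder product. -/
lemma fin3_cases : ∀ s : WLState, s ≠ 1 → s ≠ 2 → s = 0 := by decide

lemma nohit_le {ε γ : ℝ} (hγ : 0 < γ) {μ : Measure (ℕ → WLState)}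
    (hμ : IsWLLaw ε γ 1 μ) (m : ℕ) :
    μ {ω : ℕ → WLState | ∀ k ≤ m, ω k ≠ 1} ≤
      ∏ k ∈ Finset.range m, ENNReal.ofReal (pstay ε γ k) := by
  classical
  set ext : (Fin (m+1) → WLState) → (ℕ → WLState) :=
    fun x k => if h : k < m + 1 then x ⟨k, h⟩ else 0 with hext
  have hcover : {ω : ℕ → WLState | ∀ k ≤ m, ω k ≠ 1} ⊆
      ⋃ x ∈ Finset.univ.filter (fun x : Fin (m+1) → WLState => ∀ j, x j ≠ 1),
        {ω : ℕ → WLState | ∀ k ≤ m, ω k = ext x k} := by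
    intro ω hω
    refine Set.mem_iUnion₂.2 ⟨fun j : Fin (m+1) => ω j, ?_, ?_⟩
    · simp only [Finset.mem_coe, Finset.mem_filter, Finset.mem_univ, true_and]
      intro j; exact hω j (Nat.lt_succ_iff.1 j.isLt)
    · intro k hk
      simp only [hext, dif_pos (Nat.lt_succ_iff.2 hk)]
  calc μ {ω : ℕ → WLState | ∀ k ≤ m, ω k ≠ 1}
      ≤ ∑ x ∈ Finset.univ.filter (fun x : Fin (m+1) → WLState => ∀ j, x j ≠ 1),
          μ {ω : ℕ → WLState | ∀ k ≤ m, ω k = ext x k} :=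
        (measure_mono hcover).trans (measure_biUnion_finset_le _ _)
    _ = ∏ k ∈ Finset.range m, ENNReal.ofReal (pstay ε γ k) := by
        rw [Finset.sum_eq_single (fun _ => (0 : WLState))]
        · have hz : ext (fun _ => 0) = fun _ => 0 := by
            funext k; simp [hext]
          rw [hz]
          exact cyl_measure hγ hμ m
        · intro x hx hne
          simp only [Finset.mem_filter, Finset.mem_univ, true_and] at hx
          -- x is not all zero, avoids 1, so its extension jumps 0 → 2 somewhere
          have h2 : ∃ j : Fin (m+1), x j = 2 := by
            by_contra hno
            push_neg at hno
            apply hne; funext j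
            exact fin3_cases _ (hx j) (hno j)
          obtain ⟨j, hj⟩ := h2
          have hP : ∃ k, ext x k = 2 := ⟨j, by simp only [hext, dif_pos j.isLt, Fin.eta]; exact hj⟩
          set k0 := Nat.find hP with hk0
          have hk0v : ext x k0 = 2 := Nat.find_spec hP
          have hk0le : k0 ≤ m := by
            have : k0 ≤ (j : ℕ) := Nat.find_min' hP (by simp only [hext, dif_pos j.isLt, Fin.eta]; exact hj)
            exact this.trans (Nat.lt_succ_iff.1 j.isLt)
          apply bad_cyl hμ
          rcases Nat.eq_zero_or_pos k0 with h0 | hpos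
          · left; rw [h0] at hk0v; rw [hk0v]; decide
          · right
            obtain ⟨t, ht⟩ := Nat.exists_eq_add_of_lt hpos
            rw [zero_add] at ht
            refine ⟨t, by omega, Or.inl ⟨?_, by rw [← ht]; exact hk0v⟩⟩
            have ht2 : ext x t ≠ 2 := Nat.find_min hP (by omega)
            have htm : t ≤ m := by omega
            have ht1 : ext x t ≠ 1 := by
              simp only [hext, dif_pos (Nat.lt_succ_iff.2 htm)]
              exact hx _
            exact fin3_cases _ ht1 ht2
        · intro hnotmem
          exfalso; apply hnotmem
          simp only [Finset.mem_filter, Finset.mem_univ, true_and]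
          intro j; decide

lemma pstay_mem {ε γ : ℝ} (hε : 0 < ε) (hγ : 0 < γ) (k : ℕ) :
    2/3 ≤ pstay ε γ k ∧ pstay ε γ k ≤ 1 := by
  have h1 : 0 ≤ min (ε * Wpr γ k) 1 := le_min (mul_nonneg hε.le (Wpr_pos hγ k).le) zero_le_one
  have h2 : min (ε * Wpr γ k) 1 ≤ 1 := min_le_right _ _
  constructor <;> unfold pstay <;> linarith

lemma prod_one_sub_ge (n : ℕ) (t : ℕ → ℝ) (h0 : ∀ k, 0 ≤ t k) (h1 : ∀ k, t k ≤ 1) :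
    1 - ∑ k ∈ Finset.range n, t k ≤ ∏ k ∈ Finset.range n, (1 - t k) := by
  induction n with
  | zero => simp
  | succ n ih =>
    rw [Finset.prod_range_succ, Finset.sum_range_succ]
    have hs : 0 ≤ ∑ k ∈ Finset.range n, t k := Finset.sum_nonneg fun k _ => h0 k
    nlinarith [h0 n, h1 n, ih]

lemma prod_pstay_ge {ε γ : ℝ} (hε : 0 < ε) (hγ : 0 < γ) (n : ℕ) :
    1 - (1/3) * ∑ k ∈ Finset.range n, (ε * Wpr γ k) ≤ ∏ k ∈ Finset.range n, pstay ε γ k := by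
  have step1 : ∀ k, pstay ε γ k = 1 - (1/3 * min (ε * Wpr γ k) 1) := fun k => rfl
  calc 1 - (1/3) * ∑ k ∈ Finset.range n, (ε * Wpr γ k)
      ≤ 1 - ∑ k ∈ Finset.range n, (1/3 * min (ε * Wpr γ k) 1) := by
        rw [Finset.mul_sum]
        have : ∀ k ∈ Finset.range n, 1/3 * min (ε * Wpr γ k) 1 ≤ 1/3 * (ε * Wpr γ k) := by
          intro k _
          have := min_le_left (ε * Wpr γ k) 1
          linarith
        linarith [Finset.sum_le_sum this]
    _ ≤ ∏ k ∈ Finset.range n, (1 - 1/3 * min (ε * Wpr γ k) 1) := by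
        apply prod_one_sub_ge
        · intro k
          have h1 : 0 ≤ min (ε * Wpr γ k) 1 := le_min (mul_nonneg hε.le (Wpr_pos hγ k).le) zero_le_one
          linarith
        · intro k
          have h2 : min (ε * Wpr γ k) 1 ≤ 1 := min_le_right _ _
          linarith
    _ = ∏ k ∈ Finset.range n, pstay ε γ k := rfl

lemma prod_pstay_le {ε γ : ℝ} (hε : 0 < ε) (hγ : 0 < γ) (n : ℕ) :
    ∏ k ∈ Finset.range n, pstay ε γ k ≤
      Real.exp (-(1/3) * ∑ k ∈ Finset.range n, min (ε * Wpr γ k) 1) := by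
  rw [Finset.mul_sum, Real.exp_sum]
  apply Finset.prod_le_prod
  · intro k _; linarith [(pstay_mem hε hγ k).1]
  · intro k _
    have h := Real.add_one_le_exp (-(1/3) * min (ε * Wpr γ k) 1)
    unfold pstay
    linarith

lemma toReal_prod_ofReal (n : ℕ) (t : ℕ → ℝ) (h0 : ∀ k, 0 ≤ t k) :
    (∏ k ∈ Finset.range n, ENNReal.ofReal (t k)).toReal = ∏ k ∈ Finset.range n, t k := by
  rw [ENNReal.toReal_prod]
  exact Finset.prod_congr rfl fun k _ => ENNReal.toReal_ofReal (h0 k)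

set_option maxHeartbeats 1000000 in
lemma main_bound {γ ε F G : ℝ} (hγ : 0 < γ) (hε0 : 0 < ε) (hε1 : ε < 1)
    (hF : 0 < F) (hG4 : 4 ≤ G)
    {μ : Measure (ℕ → WLState)} [IsProbabilityMeasure μ] (hμ : IsWLLaw ε γ 1 μ) :
    1 - (Real.exp γ * (2:ℝ) ^ (1+γ) / 3) * (F ^ (1+γ) + ε)
      - Real.exp (-(G/4/(1+γ) ^ γ)/3)
    ≤ (μ {ω : ℕ → WLState |
          F * ε ^ (-(1/(1+γ))) < (hitTime 1 ω : ℝ) ∧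
          (hitTime 1 ω : ℝ) < G * ε ^ (-(1/(1+γ)))}).toReal := by
  have h1γ : (0:ℝ) < 1 + γ := by linarith
  set E : ℝ := ε ^ (-(1/(1+γ))) with hEdef
  have hEpos : 0 < E := Real.rpow_pos_of_pos hε0 _
  have hE1 : 1 ≤ E := Real.one_le_rpow_of_pos_of_le_one_of_nonpos hε0 hε1.le
    (by rw [neg_nonpos]; positivity)
  have hEkey : ε * E ^ (1+γ) = 1 := by
    rw [hEdef, ← Real.rpow_mul hε0.le]
    have : -(1/(1+γ)) * (1+γ) = -1 := by field_simp
    rw [this, Real.rpow_neg_one, mul_inv_cancel₀ (ne_of_gt hε0)]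
  set a : ℝ := F * E with hadef
  set b : ℝ := G * E with hbdef
  have hapos : 0 < a := by positivity
  have hbpos : 0 < b := by positivity
  have hb4 : 4 ≤ b := le_trans hG4 (by nlinarith)
  set n : ℕ := ⌈a⌉₊ with hndef
  have hceil1 : 1 ≤ ⌈b⌉₊ := Nat.one_le_ceil_iff.2 hbpos
  set m : ℕ := ⌈b⌉₊ - 1 with hmdef
  have hmR : (m:ℝ) = (⌈b⌉₊ : ℝ) - 1 := by
    rw [hmdef, Nat.cast_sub hceil1, Nat.cast_one]
  have hm_lt_b : (m:ℝ) < b := by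
    rw [hmR]; have := Nat.ceil_lt_add_one hbpos.le; linarith
  have hm_ge : b - 1 ≤ (m:ℝ) := by
    rw [hmR]; have := Nat.le_ceil b; linarith
  have hn_ge_a : a ≤ (n:ℝ) := Nat.le_ceil a
  have hn_lt : (n:ℝ) < a + 1 := Nat.ceil_lt_add_one hapos.le
  -- the target event
  set A : Set (ℕ → WLState) := {ω : ℕ → WLState |
      F * E < (hitTime 1 ω : ℝ) ∧ (hitTime 1 ω : ℝ) < G * E} with hAdef
  set C : Set (ℕ → WLState) := {ω : ℕ → WLState | ∀ k ≤ n, ω k = 0} with hCdef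
  set N : Set (ℕ → WLState) := {ω : ℕ → WLState | ∀ k ≤ m, ω k ≠ 1} with hNdef
  -- inclusion C ⊆ A ∪ N
  have hincl : C ⊆ A ∪ N := by
    intro ω hω
    by_cases hN : ∀ k ≤ m, ω k ≠ 1
    · exact Or.inr hN
    · left
      push_neg at hN
      obtain ⟨k, hkm, hk1⟩ := hN
      have hne : {j : ℕ | ω j = 1}.Nonempty := ⟨k, hk1⟩
      have hT1 : ω (hitTime 1 ω) = 1 := Nat.sInf_mem hne
      have hTle : hitTime 1 ω ≤ k := Nat.sInf_le hk1
      have hTgt : n < hitTime 1 ω := by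
        by_contra hle
        push_neg at hle
        have := hω _ hle
        rw [this] at hT1
        exact absurd hT1 (by decide)
      constructor
      · calc F * E = a := rfl
          _ ≤ (n:ℝ) := hn_ge_a
          _ < (hitTime 1 ω : ℝ) := by exact_mod_cast hTgt
      · calc (hitTime 1 ω : ℝ) ≤ (k:ℝ) := by exact_mod_cast hTle
          _ ≤ (m:ℝ) := by exact_mod_cast hkm
          _ < b := hm_lt_b
  -- measure bounds
  have hμA_top : μ A ≠ ⊤ := measure_ne_top μ A
  have hμN_top : μ N ≠ ⊤ := measure_ne_top μ N
  have hmeas : μ C ≤ μ A + μ N := le_trans (measure_mono hincl) (measure_union_le A N)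
  have hPC : (μ C).toReal ≤ (μ A).toReal + (μ N).toReal := by
    have h2 := ENNReal.toReal_mono (by simp [ENNReal.add_ne_top, hμA_top, hμN_top]) hmeas
    rwa [ENNReal.toReal_add hμA_top hμN_top] at h2
  -- lower bound for μ C
  have hCval : (μ C).toReal = ∏ k ∈ Finset.range n, pstay ε γ k := by
    rw [hCdef, cyl_measure hγ hμ n, toReal_prod_ofReal]
    intro k; linarith [(pstay_mem hε0 hγ k).1]
  have hsum_up : ∑ k ∈ Finset.range n, (ε * Wpr γ k) ≤
      Real.exp γ * ((2:ℝ) ^ (1+γ) * (F ^ (1+γ) + ε)) := by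
    have hterm : ∀ k ∈ Finset.range n, ε * Wpr γ k ≤ ε * (Real.exp γ * (n:ℝ) ^ γ) := by
      intro k hk
      have hkn : (k:ℝ) + 1 ≤ (n:ℝ) := by
        have := Finset.mem_range.1 hk; exact_mod_cast Nat.succ_le_of_lt this
      have h1 := Wpr_le hγ k
      have h2 : ((k:ℝ)+1) ^ γ ≤ (n:ℝ) ^ γ :=
        Real.rpow_le_rpow (by positivity) hkn hγ.le
      have h3 : Wpr γ k ≤ Real.exp γ * (n:ℝ) ^ γ := by
        calc Wpr γ k ≤ Real.exp γ * ((k:ℝ)+1) ^ γ := h1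
          _ ≤ Real.exp γ * (n:ℝ) ^ γ := by
              apply mul_le_mul_of_nonneg_left h2 (Real.exp_pos γ).le
      exact mul_le_mul_of_nonneg_left h3 hε0.le
    have hbig : (n:ℝ) * (ε * (Real.exp γ * (n:ℝ) ^ γ)) ≤
        Real.exp γ * ((2:ℝ) ^ (1+γ) * (F ^ (1+γ) + ε)) := by
      have hxx : ε * ((n:ℝ) * (n:ℝ) ^ γ) ≤ (2:ℝ) ^ (1+γ) * (F ^ (1+γ) + ε) := by
        have hn0 : (0:ℝ) ≤ (n:ℝ) := Nat.cast_nonneg n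
        have e1 : (n:ℝ) * (n:ℝ) ^ γ ≤ (a+1) * (a+1) ^ γ := by
          apply mul_le_mul hn_lt.le
            (Real.rpow_le_rpow hn0 hn_lt.le hγ.le) (by positivity) (by positivity)
        have e2 : (a+1) * (a+1) ^ γ = (a+1) ^ (1+γ) := by
          rw [Real.rpow_add (by positivity), Real.rpow_one]
        have e3 : (a+1) ^ (1+γ) ≤ (2 * max a 1) ^ (1+γ) := by
          apply Real.rpow_le_rpow (by positivity)
          · have h4 := le_max_left a 1; have h5 := le_max_right a 1; linarith
          · positivity
        have e4 : (2 * max a 1) ^ (1+γ) = (2:ℝ) ^ (1+γ) * (max a 1) ^ (1+γ) := by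
          rw [Real.mul_rpow (by norm_num) (by positivity)]
        have e5 : ε * (max a 1) ^ (1+γ) ≤ F ^ (1+γ) + ε := by
          rcases le_total a 1 with h | h
          · rw [max_eq_right h, Real.one_rpow, mul_one]
            have : (0:ℝ) ≤ F ^ (1+γ) := by positivity
            linarith
          · rw [max_eq_left h, hadef, Real.mul_rpow hF.le hEpos.le]
            have : ε * (F ^ (1+γ) * E ^ (1+γ)) = F ^ (1+γ) * (ε * E ^ (1+γ)) := by ring
            rw [this, hEkey, mul_one]
            linarith
        have h2p : (0:ℝ) < (2:ℝ) ^ (1+γ) := by positivity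
        calc ε * ((n:ℝ) * (n:ℝ) ^ γ) ≤ ε * ((a+1) ^ (1+γ)) := by
              rw [← e2]; exact mul_le_mul_of_nonneg_left e1 hε0.le
          _ ≤ ε * ((2:ℝ) ^ (1+γ) * (max a 1) ^ (1+γ)) := by
              rw [← e4]; exact mul_le_mul_of_nonneg_left e3 hε0.le
          _ = (2:ℝ) ^ (1+γ) * (ε * (max a 1) ^ (1+γ)) := by ring
          _ ≤ (2:ℝ) ^ (1+γ) * (F ^ (1+γ) + ε) := by
              exact mul_le_mul_of_nonneg_left e5 h2p.le
      nlinarith [Real.exp_pos γ]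
    calc ∑ k ∈ Finset.range n, (ε * Wpr γ k)
        ≤ ∑ _k ∈ Finset.range n, (ε * (Real.exp γ * (n:ℝ) ^ γ)) := Finset.sum_le_sum hterm
      _ = (n:ℝ) * (ε * (Real.exp γ * (n:ℝ) ^ γ)) := by
          rw [Finset.sum_const, Finset.card_range, nsmul_eq_mul]
      _ ≤ _ := hbig
  have hPC_low : 1 - (Real.exp γ * (2:ℝ) ^ (1+γ) / 3) * (F ^ (1+γ) + ε) ≤ (μ C).toReal := by
    rw [hCval]
    refine le_trans ?_ (prod_pstay_ge hε0 hγ n)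
    nlinarith [hsum_up]
  -- upper bound for μ N
  have hNval : (μ N).toReal ≤ Real.exp (-(G/4/(1+γ) ^ γ)/3) := by
    have h1 : (μ N).toReal ≤ ∏ k ∈ Finset.range m, pstay ε γ k := by
      rw [← toReal_prod_ofReal m (pstay ε γ) (fun k => by linarith [(pstay_mem hε0 hγ k).1])]
      apply ENNReal.toReal_mono _ (nohit_le hγ hμ m)
      exact (ENNReal.prod_lt_top (fun k _ => ENNReal.ofReal_lt_top)).ne
    refine h1.trans ((prod_pstay_le hε0 hγ m).trans ?_)
    -- need: ∑ min ≥ G/4/(1+γ)^γ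
    have hq : G/4/(1+γ) ^ γ ≤ ∑ k ∈ Finset.range m, min (ε * Wpr γ k) 1 := by
      set h2 : ℕ := m / 2 with hh2
      set R : ℝ := (m:ℝ) with hR
      have hRb : b - 1 ≤ R := hm_ge
      have hRb2 : b / 2 ≤ R := by linarith
      have hRpos : 0 < R := by linarith
      have hterm : ∀ k ∈ Finset.Ico h2 m,
          min (ε * ((R/2)/(1+γ)) ^ γ) 1 ≤ min (ε * Wpr γ k) 1 := by
        intro k hk
        obtain ⟨hk1, hk2⟩ := Finset.mem_Ico.1 hk
        apply min_le_min _ le_rfl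
        apply mul_le_mul_of_nonneg_left _ hε0.le
        refine le_trans ?_ (Wpr_ge hγ k)
        have hcast : (h2:ℝ) + 1 ≤ (k:ℝ) + 1 := by
          have : (h2:ℝ) ≤ (k:ℝ) := by exact_mod_cast hk1
          linarith
        have hh2R : R / 2 ≤ (h2:ℝ) + 1 := by
          have : m ≤ 2 * h2 + 1 := by omega
          have hc : R ≤ 2 * (h2:ℝ) + 1 := by rw [hR]; exact_mod_cast this
          linarith
        have hfin : R / 2 ≤ (k:ℝ) + 1 := by linarith
        apply Real.rpow_le_rpow (by positivity) _ hγ.le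
        gcongr
      have hcard : (Finset.Ico h2 m).card = m - h2 := Nat.card_Ico h2 m
      have hsum1 : (m - h2 : ℕ) • min (ε * ((R/2)/(1+γ)) ^ γ) 1 ≤
          ∑ k ∈ Finset.Ico h2 m, min (ε * Wpr γ k) 1 := by
        rw [← hcard]
        exact Finset.card_nsmul_le_sum _ _ _ hterm
      have hsub : ∑ k ∈ Finset.Ico h2 m, min (ε * Wpr γ k) 1 ≤
          ∑ k ∈ Finset.range m, min (ε * Wpr γ k) 1 := by
        apply Finset.sum_le_sum_of_subset_of_nonneg
        · intro k hk
          rw [Finset.mem_range]; exact (Finset.mem_Ico.1 hk).2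
        · intro k _ _
          exact le_min (mul_nonneg hε0.le (Wpr_pos hγ k).le) zero_le_one
      have hminpos : 0 ≤ min (ε * ((R/2)/(1+γ)) ^ γ) 1 :=
        le_min (by positivity) zero_le_one
      have hcount : R / 2 ≤ ((m - h2 : ℕ) : ℝ) := by
        have : ((m - h2 : ℕ) : ℝ) = R - (h2:ℝ) := by
          rw [hR, Nat.cast_sub (show h2 ≤ m from Nat.div_le_self m 2)]
        rw [this]
        have : (h2:ℝ) ≤ R / 2 := by
          rw [hh2, hR]; exact_mod_cast Nat.cast_div_le
        linarith
      have hstep : R/2 * min (ε * ((R/2)/(1+γ)) ^ γ) 1 ≤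
          ∑ k ∈ Finset.range m, min (ε * Wpr γ k) 1 := by
        refine le_trans ?_ (le_trans hsum1 hsub)
        rw [nsmul_eq_mul]
        exact mul_le_mul_of_nonneg_right hcount hminpos
      refine le_trans ?_ hstep
      -- final arithmetic: R/2 * min(...) ≥ G/4/(1+γ)^γ
      have hb4R : b/4 ≤ R/2 := by linarith
      rcases le_total (ε * ((R/2)/(1+γ)) ^ γ) 1 with hc | hc
      · rw [min_eq_left hc]
        have hG1 : (1:ℝ) ≤ G/4 := by linarith
        have hRb4 : G/4 * E ≤ R/2 := by
          have hGb : G/4 * E = b/4 := by rw [hbdef]; ring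
          linarith
        have hrw : R/2 * (ε * ((R/2)/(1+γ)) ^ γ) = ε * (R/2) ^ (1+γ) / (1+γ) ^ γ := by
          rw [Real.div_rpow (by positivity) h1γ.le,
            Real.rpow_add (by positivity : (0:ℝ) < R/2), Real.rpow_one]
          field_simp
        have key : G/4 ≤ ε * (R/2) ^ (1+γ) := by
          have h1 : (G/4 * E) ^ (1+γ) ≤ (R/2) ^ (1+γ) :=
            Real.rpow_le_rpow (by positivity) hRb4 (by positivity)
          have h2 : (G/4*E) ^ (1+γ) = (G/4) ^ (1+γ) * E ^ (1+γ) :=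
            Real.mul_rpow (by positivity) hEpos.le
          have h3 : ε * ((G/4) ^ (1+γ) * E ^ (1+γ)) = (G/4) ^ (1+γ) := by
            rw [show ε * ((G/4) ^ (1+γ) * E ^ (1+γ)) = (G/4) ^ (1+γ) * (ε * E ^ (1+γ)) by ring,
              hEkey, mul_one]
          have h4 : G/4 ≤ (G/4) ^ (1+γ) := by
            calc G/4 = (G/4) ^ (1:ℝ) := (Real.rpow_one _).symm
              _ ≤ (G/4) ^ (1+γ) := Real.rpow_le_rpow_of_exponent_le hG1 (by linarith)
          calc G/4 ≤ (G/4) ^ (1+γ) := h4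
            _ = ε * ((G/4) ^ (1+γ) * E ^ (1+γ)) := h3.symm
            _ ≤ ε * (R/2) ^ (1+γ) := by
                rw [h2] at h1; exact mul_le_mul_of_nonneg_left h1 hε0.le
        rw [hrw]
        gcongr
      · rw [min_eq_right hc, mul_one]
        have h1 : (1:ℝ) ≤ (1+γ) ^ γ := Real.one_le_rpow (by linarith) hγ.le
        have h2 : G/4/(1+γ) ^ γ ≤ G/4 := div_le_self (by linarith) h1
        have hGb : G ≤ b := by rw [hbdef]; nlinarith
        linarith
    have : Real.exp (-(1/3) * ∑ k ∈ Finset.range m, min (ε * Wpr γ k) 1) ≤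
        Real.exp (-(G/4/(1+γ) ^ γ)/3) := by
      apply Real.exp_le_exp.2
      nlinarith [hq]
    exact this
  -- combine
  linarith [hPC_low, hNval, hPC]

set_option maxHeartbeats 1000000 in
/-- For `α = 1`, with `a(ε) = f(ε)·ε^{−1/(1+γ⋆)}` and
`b̃(ε) = g̃(ε)·ε^{−1/(1+γ⋆)}` where `f → 0` and `g̃ → ∞`, the first passage time to
state 2 satisfies `lim_{ε→0} P(a(ε) < T⁰₁→₂ < b̃(ε)) = 1`. -/
theorem stmt9 (γs : ℝ) (hγs : 0 < γs)
    (μ : ℝ → Measure (ℕ → WLState))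
    (hprob : ∀ ε ∈ Set.Ioo (0 : ℝ) 1, IsProbabilityMeasure (μ ε))
    (hμ : ∀ ε ∈ Set.Ioo (0 : ℝ) 1, IsWLLaw ε γs 1 (μ ε))
    (f gt : ℝ → ℝ)
    (hfpos : ∀ ε ∈ Set.Ioo (0 : ℝ) 1, 0 < f ε) (hgtpos : ∀ ε ∈ Set.Ioo (0 : ℝ) 1, 0 < gt ε)
    (hf : Tendsto f (𝓝[Set.Ioo (0 : ℝ) 1] 0) (𝓝 0))
    (hgt : Tendsto gt (𝓝[Set.Ioo (0 : ℝ) 1] 0) atTop) :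
    Tendsto
      (fun ε : ℝ =>
        (μ ε {ω : ℕ → WLState |
          f ε * ε ^ (-(1 / (1 + γs))) < (hitTime 1 ω : ℝ) ∧
            (hitTime 1 ω : ℝ) < gt ε * ε ^ (-(1 / (1 + γs)))}).toReal)
      (𝓝[Set.Ioo (0 : ℝ) 1] 0) (𝓝 1) := by
  
  set l := 𝓝[Set.Ioo (0 : ℝ) 1] (0:ℝ) with hl
  set P : ℝ → ℝ := fun ε =>
    (μ ε {ω : ℕ → WLState |
      f ε * ε ^ (-(1 / (1 + γs))) < (hitTime 1 ω : ℝ) ∧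
        (hitTime 1 ω : ℝ) < gt ε * ε ^ (-(1 / (1 + γs)))}).toReal with hP
  set L : ℝ → ℝ := fun ε =>
    1 - (Real.exp γs * (2:ℝ) ^ (1+γs) / 3) * ((f ε) ^ (1+γs) + ε)
      - Real.exp (-(gt ε/4/(1+γs) ^ γs)/3) with hLdef
  have hmem : ∀ᶠ ε in l, ε ∈ Set.Ioo (0:ℝ) 1 := eventually_mem_nhdsWithin
  have hgt4 : ∀ᶠ ε in l, 4 ≤ gt ε := hgt.eventually_ge_atTop 4
  have h_low : ∀ᶠ ε in l, L ε ≤ P ε := by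
    filter_upwards [hmem, hgt4] with ε hε hg4
    haveI := hprob ε hε
    exact main_bound hγs hε.1 hε.2 (hfpos ε hε) hg4 (hμ ε hε)
  have h_up : ∀ᶠ ε in l, P ε ≤ 1 := by
    filter_upwards [hmem] with ε hε
    haveI := hprob ε hε
    have h1 : μ ε {ω : ℕ → WLState |
        f ε * ε ^ (-(1 / (1 + γs))) < (hitTime 1 ω : ℝ) ∧
          (hitTime 1 ω : ℝ) < gt ε * ε ^ (-(1 / (1 + γs)))} ≤ 1 := prob_le_one
    have h2 := ENNReal.toReal_mono ENNReal.one_ne_top h1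
    rw [ENNReal.toReal_one] at h2
    exact h2
  have hTε : Tendsto (fun ε : ℝ => ε) l (𝓝 0) := tendsto_id.mono_right nhdsWithin_le_nhds
  have hT1 : Tendsto (fun ε => (f ε) ^ (1+γs)) l (𝓝 0) := by
    apply squeeze_zero'
    · filter_upwards [hmem] with ε hε
      exact Real.rpow_nonneg (hfpos ε hε).le _
    · have hfev : ∀ᶠ ε in l, f ε ≤ 1 := by
        filter_upwards [hf.eventually (eventually_le_nhds (by norm_num : (0:ℝ) < 1))]
          with ε h using h
      filter_upwards [hmem, hfev] with ε hε h1
      calc (f ε) ^ (1+γs) ≤ (f ε) ^ (1:ℝ) :=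
            Real.rpow_le_rpow_of_exponent_ge (hfpos ε hε) h1 (by linarith)
        _ = f ε := Real.rpow_one _
    · exact hf
  have hT2 : Tendsto (fun ε => Real.exp (-(gt ε/4/(1+γs) ^ γs)/3)) l (𝓝 0) := by
    apply Real.tendsto_exp_atBot.comp
    have hpow : (0:ℝ) < (1+γs) ^ γs := Real.rpow_pos_of_pos (by linarith) _
    have h1 : Tendsto (fun ε => gt ε/4/(1+γs) ^ γs) l atTop :=
      (hgt.atTop_div_const (by norm_num)).atTop_div_const hpow
    have h2 : Tendsto (fun ε => -(gt ε/4/(1+γs) ^ γs)) l atBot :=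
      tendsto_neg_atTop_atBot.comp h1
    exact h2.atBot_div_const (by norm_num)
  have hL : Tendsto L l (𝓝 1) := by
    have := ((tendsto_const_nhds (x := (1:ℝ)) (f := l)).sub
      (((hT1.add hTε).const_mul (Real.exp γs * (2:ℝ) ^ (1+γs) / 3)))).sub hT2
    simpa using this
  exact tendsto_of_tendsto_of_tendsto_of_le_of_le' hL tendsto_const_nhds h_low h_up
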